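/- For every δ > 0 there exist a constant c > 0 and an integer K such that for every integer k ≥ K one has Σ_{j=1}^∞ 2^{2jk} · j^{-j·j^{1/δ}} ≤ exp(c·k^{1+δ}). Here j^{-j·j^{1/δ}} = (j^{j^{1/δ}})^{-j}, and the series on the left is convergent for each fixed k. -/
import Mathlib


/-- Lemma 4.1 of the paper: for every `δ > 0` there are `c > 0` and `K` such that for all
`k ≥ K` the series `∑_{j≥1} 2^(2jk) · j^(-j·j^(1/δ))` converges and is at most
`exp (c k^(1+δ))`. -/
theorem stmt_1 (δ : ℝ) (hδ : 0 < δ) :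
    ∃ c : ℝ, 0 < c ∧ ∃ K : ℕ, ∀ k : ℕ, K ≤ k →
      Summable (fun j : ℕ =>
        (2 : ℝ) ^ (2 * (j + 1) * k) *
          ((j + 1 : ℕ) : ℝ) ^ (-(((j + 1 : ℕ) : ℝ) * ((j + 1 : ℕ) : ℝ) ^ ((1 : ℝ) / δ)))) ∧
      (∑' j : ℕ,
        (2 : ℝ) ^ (2 * (j + 1) * k) *
          ((j + 1 : ℕ) : ℝ) ^ (-(((j + 1 : ℕ) : ℝ) * ((j + 1 : ℕ) : ℝ) ^ ((1 : ℝ) / δ))))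
        ≤ Real.exp (c * (k : ℝ) ^ ((1 : ℝ) + δ)) := by
  refine ⟨3 ^ ((1:ℝ)+δ) * Real.log 2, by positivity, 1, fun k hk => ?_⟩
  set c : ℝ := 3 ^ ((1:ℝ)+δ) * Real.log 2 with hc
  have hk1 : (1:ℝ) ≤ (k:ℝ) := by exact_mod_cast hk
  set C : ℝ := c * (k:ℝ) ^ ((1:ℝ)+δ) with hCdef
  have hC0 : 0 ≤ C := by positivity
  have hlog2 : 0 < Real.log 2 := Real.log_pos one_lt_two
  -- key pointwise bound
  have key : ∀ j : ℕ,
      (2 : ℝ) ^ (2 * (j + 1) * k) *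
        ((j + 1 : ℕ) : ℝ) ^ (-(((j + 1 : ℕ) : ℝ) * ((j + 1 : ℕ) : ℝ) ^ ((1 : ℝ) / δ)))
      ≤ (Real.exp C / 2) * (1/2 : ℝ) ^ j := by
    intro j
    set n : ℕ := j + 1 with hn
    have hn1 : (1:ℝ) ≤ (n:ℝ) := by exact_mod_cast Nat.one_le_iff_ne_zero.2 (Nat.succ_ne_zero j)
    have hn0 : (0:ℝ) < (n:ℝ) := lt_of_lt_of_le one_pos hn1
    have hrhs : (Real.exp C / 2) * (1/2 : ℝ) ^ j = Real.exp C * (1/2 : ℝ) ^ n := by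
      rw [hn, pow_succ]; ring
    rw [hrhs]
    have e1 : (2 : ℝ) ^ (2 * n * k) = Real.exp (((2 * n * k : ℕ) : ℝ) * Real.log 2) := by
      rw [Real.exp_nat_mul, Real.exp_log two_pos]
    have e2 : ((n : ℕ) : ℝ) ^ (-((n:ℝ) * (n:ℝ) ^ ((1:ℝ)/δ)))
        = Real.exp (-((n:ℝ) * (n:ℝ) ^ ((1:ℝ)/δ)) * Real.log n) := by
      rw [Real.rpow_def_of_pos hn0, mul_comm]
    have e3 : ((1:ℝ)/2) ^ (n:ℕ) = Real.exp (-((n:ℝ) * Real.log 2)) := by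
      rw [show -((n:ℝ) * Real.log 2) = (n:ℕ) * (-Real.log 2) by push_cast; ring,
        Real.exp_nat_mul, Real.exp_neg, Real.exp_log two_pos]
      norm_num
    rw [e1, e2, e3, ← Real.exp_add, ← Real.exp_add, Real.exp_le_exp]
    have hlogn : 0 ≤ Real.log n := Real.log_nonneg hn1
    have hcast : ((2 * n * k : ℕ) : ℝ) = 2 * (n:ℝ) * (k:ℝ) := by push_cast; ring
    rw [hcast]
    have main : (n:ℝ) * (2*(k:ℝ)+1) * Real.log 2
        ≤ (n:ℝ) * (n:ℝ) ^ ((1:ℝ)/δ) * Real.log n + C := by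
      rcases le_or_gt ((n:ℝ)) ((2*(k:ℝ)+1) ^ δ) with h | h
      · have h2k : (1:ℝ) ≤ 2*(k:ℝ)+1 := by linarith
        have h1 : (n:ℝ) * (2*(k:ℝ)+1) * Real.log 2
            ≤ (2*(k:ℝ)+1) ^ ((1:ℝ)+δ) * Real.log 2 := by
          have hsplit : (2*(k:ℝ)+1) ^ ((1:ℝ)+δ) = (2*(k:ℝ)+1) ^ δ * (2*(k:ℝ)+1) := by
            rw [add_comm, Real.rpow_add (by linarith), Real.rpow_one]; ring
          rw [hsplit]
          exact mul_le_mul_of_nonneg_right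
            (mul_le_mul_of_nonneg_right h (by linarith)) hlog2.le
        have h2 : (2*(k:ℝ)+1) ^ ((1:ℝ)+δ) * Real.log 2
            ≤ (3*(k:ℝ)) ^ ((1:ℝ)+δ) * Real.log 2 :=
          mul_le_mul_of_nonneg_right
            (Real.rpow_le_rpow (by linarith) (by linarith) (by linarith)) hlog2.le
        have h3 : (3*(k:ℝ)) ^ ((1:ℝ)+δ) = 3 ^ ((1:ℝ)+δ) * (k:ℝ) ^ ((1:ℝ)+δ) :=
          Real.mul_rpow (by norm_num) (by positivity)
        have h4 : 0 ≤ (n:ℝ) * (n:ℝ) ^ ((1:ℝ)/δ) * Real.log n := by positivity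
        have h5 : (3*(k:ℝ)) ^ ((1:ℝ)+δ) * Real.log 2 = C := by rw [h3, hCdef, hc]; ring
        linarith
      · have hpow : (2*(k:ℝ)+1) ≤ (n:ℝ) ^ ((1:ℝ)/δ) := by
          have hmono := Real.rpow_le_rpow (by positivity : (0:ℝ) ≤ (2*(k:ℝ)+1) ^ δ) h.le
            (by positivity : (0:ℝ) ≤ 1/δ)
          rwa [← Real.rpow_mul (by positivity), mul_one_div, div_self hδ.ne',
            Real.rpow_one] at hmono
        have hn2 : (2:ℝ) ≤ (n:ℝ) := by
          have h1lt : (1:ℝ) < (2*(k:ℝ)+1) ^ δ :=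
            Real.one_lt_rpow_iff_of_pos (by linarith) |>.2 (Or.inl ⟨by linarith, hδ⟩)
          have : (1:ℝ) < (n:ℝ) := lt_trans h1lt h
          exact_mod_cast (by exact_mod_cast this : 1 < n)
        have hlogn2 : Real.log 2 ≤ Real.log n := Real.log_le_log two_pos hn2
        have hprod : (n:ℝ) * (2*(k:ℝ)+1) * Real.log 2
            ≤ (n:ℝ) * (n:ℝ) ^ ((1:ℝ)/δ) * Real.log n := by
          have s1 : (n:ℝ) * (2*(k:ℝ)+1) ≤ (n:ℝ) * (n:ℝ) ^ ((1:ℝ)/δ) :=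
            mul_le_mul_of_nonneg_left hpow hn0.le
          exact mul_le_mul s1 hlogn2 hlog2.le (by positivity)
        linarith
    nlinarith [main]
  have hg : Summable (fun j : ℕ => (Real.exp C / 2) * (1/2 : ℝ) ^ j) :=
    (summable_geometric_of_lt_one (by norm_num) (by norm_num)).mul_left _
  have hfpos : ∀ j : ℕ, 0 ≤ (2 : ℝ) ^ (2 * (j + 1) * k) *
      ((j + 1 : ℕ) : ℝ) ^ (-(((j + 1 : ℕ) : ℝ) * ((j + 1 : ℕ) : ℝ) ^ ((1 : ℝ) / δ))) := by
    intro j; positivity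
  have hf : Summable (fun j : ℕ =>
      (2 : ℝ) ^ (2 * (j + 1) * k) *
        ((j + 1 : ℕ) : ℝ) ^ (-(((j + 1 : ℕ) : ℝ) * ((j + 1 : ℕ) : ℝ) ^ ((1 : ℝ) / δ)))) :=
    Summable.of_nonneg_of_le hfpos key hg
  refine ⟨hf, ?_⟩
  have hsum := Summable.tsum_le_tsum key hf hg
  have hgsum : (∑' j : ℕ, (Real.exp C / 2) * (1/2 : ℝ) ^ j) = Real.exp C := by
    rw [tsum_mul_left, tsum_geometric_of_lt_one (by norm_num) (by norm_num)]
    norm_num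
  rw [hgsum] at hsum
  exact hsum
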